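/- Let O be a complete discrete valuation ring with uniformizer p and residue characteristic p, and fix n ≥ 1. Consider the extension of complete local rings O[ζ_{p^n}][[T_{n-1}]] ⊆ O[ζ_{p^n}][[T_n]] where (1+T_n)^p = 1+T_{n-1}. Then this extension is finite free of rank p, and the O[ζ_{p^n}][[T_n]]-module Hom_{O[ζ_{p^n}][[T_{n-1}]]}(O[ζ_{p^n}][[T_n]], O[ζ_{p^n}][[T_{n-1}]]) is free of rank 1 generated by (1/p)·Tr, where Tr is the trace form of the extension. -/

import Mathlib

/-!
STATEMENT 11: O a complete DVR with uniformizer p (residue characteristic p), n ≥ 1,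
O' = O[ζ_{p^n}].  The extension O'[[T_{n-1}]] ⊆ O'[[T_n]], (1+T_n)^p = 1+T_{n-1},
is finite free of rank p and Hom_{O'[[T_{n-1}]]}(O'[[T_n]], O'[[T_{n-1}]]) is free of
rank 1 generated by (1/p)·Tr.  We realize O'[[T_{n-1}]] as the image A of the
continuous O'-algebra endomorphism ι of R = O'[[T]] sending T ↦ (1+T)^p − 1.
-/

set_option maxHeartbeats 1000000
set_option synthInstance.maxHeartbeats 1000000

open PowerSeries Finset

namespace InvDiffAux

noncomputable section

variable {Γ : Type} [CommRing Γ] (p : ℕ)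

local notation "R" => PowerSeries Γ

def S : R := (1 + X) ^ p - 1

def bigD : R := ∑ i ∈ Ioo 0 p, ((p.choose i / p : ℕ) : R) * X ^ i

def shiftp (F : R) : R := PowerSeries.mk fun m => coeff (m + p) F

def polypart (F : R) : R := ∑ j ∈ range p, PowerSeries.C (coeff j F) * X ^ j

def stepD (F : R) : R := -(bigD p * shiftp p F)

def iterD (F : R) (k : ℕ) : R := (stepD p)^[k] F

lemma coeff_X_pow_mul_of_lt {J m : ℕ} (h : m < J) (G : R) : coeff m (X ^ J * G) = 0 := by
  rw [coeff_X_pow_mul', if_neg (by omega)]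

lemma X_dvd_S : (X : R) ∣ S p := by
  rw [X_dvd_iff]
  simp [S]

lemma coeff_S_pow_mul {J m : ℕ} (h : m < J) (G : R) : coeff m (S p ^ J * G) = 0 := by
  obtain ⟨c, hc⟩ := X_dvd_S (Γ := Γ) p
  rw [hc, mul_pow, mul_assoc]
  exact coeff_X_pow_mul_of_lt h _

lemma coeff_nat_pow_mul (k m : ℕ) (G : R) :
    coeff m ((p : R) ^ k * G) = (p : Γ) ^ k * coeff m G := by
  rw [show ((p : R)) ^ k = PowerSeries.C ((p : Γ) ^ k) by
    rw [map_pow, map_natCast], coeff_C_mul]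

lemma sd (hp : p.Prime) : S (Γ := Γ) p = X ^ p + (p : R) * bigD p := by
  have h1 : ((1 : R) + X) ^ p = ∑ k ∈ range (p + 1), X ^ k * ((p.choose k : ℕ) : R) := by
    rw [add_comm (1 : R) X, add_pow]
    simp
  rw [S, h1, Finset.sum_range_succ, bigD, Finset.mul_sum]
  have h0 : (0 : ℕ) ∈ range p := by simp [hp.pos]
  rw [← Finset.sum_erase_add (range p) _ h0]
  have herase : (range p).erase 0 = Ioo 0 p := by
    ext a; simp [Nat.pos_iff_ne_zero, and_comm]
  rw [herase]
  have hterm : ∀ i ∈ Ioo 0 p, (X : R) ^ i * ((p.choose i : ℕ) : R)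
      = (p : R) * (((p.choose i / p : ℕ) : R) * X ^ i) := by
    intro i hi
    simp only [mem_Ioo] at hi
    have hdvd : p ∣ p.choose i := Nat.Prime.dvd_choose_self hp (by omega) hi.2
    have hc : ((p : R)) * (((p.choose i / p : ℕ)) : R) = ((p.choose i : ℕ) : R) := by
      rw [← Nat.cast_mul, Nat.mul_div_cancel' hdvd]
    linear_combination (-(X : R) ^ i) * hc
  rw [Finset.sum_congr rfl hterm]
  simp
  ring

lemma decomp (F : R) : F = polypart p F + X ^ p * shiftp p F := by
  ext m
  rw [map_add]
  have hpp : coeff m (polypart p F) = if m < p then coeff m F else 0 := by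
    rw [polypart, map_sum]
    simp only [coeff_C_mul, coeff_X_pow, mul_ite, mul_one, mul_zero]
    rw [Finset.sum_ite_eq (range p) m (fun j => coeff j F)]
    simp
  by_cases hm : m < p
  · rw [hpp, if_pos hm, coeff_X_pow_mul_of_lt hm, add_zero]
  · rw [hpp, if_neg hm, coeff_X_pow_mul', if_pos (by omega), zero_add, shiftp, coeff_mk]
    rw [show m - p + p = m from by omega]

lemma onestep (hp : p.Prime) (F : R) :
    F = polypart p F + S p * shiftp p F + (p : R) * stepD p F := by
  have h1 := decomp p F
  have h2 := sd (Γ := Γ) p hp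
  rw [stepD]
  linear_combination h1 - shiftp p F * h2

lemma iterD_succ (F : R) (k : ℕ) : iterD p F (k + 1) = stepD p (iterD p F k) :=
  Function.iterate_succ_apply' _ _ _

lemma telescope1 (hp : p.Prime) (F : R) (K : ℕ) :
    F = (∑ k ∈ range K, (p : R) ^ k * polypart p (iterD p F k))
      + S p * (∑ k ∈ range K, (p : R) ^ k * shiftp p (iterD p F k))
      + (p : R) ^ K * iterD p F K := by
  induction K with
  | zero => simp [iterD]
  | succ K ih =>
    rw [Finset.sum_range_succ, Finset.sum_range_succ, iterD_succ]
    have h := onestep p hp (iterD p F K)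
    linear_combination ih + (p : R) ^ K * h

lemma division (hp : p.Prime)
    (hhaus : ∀ x : Γ, (∀ k : ℕ, (p : Γ) ^ k ∣ x) → x = 0)
    (hcomp : ∀ a : ℕ → Γ, ∃ L : Γ, ∀ K : ℕ,
      (p : Γ) ^ K ∣ (L - ∑ k ∈ range K, (p : Γ) ^ k * a k))
    (F : R) : ∃ r q : R, (∀ m, p ≤ m → coeff m r = 0) ∧ F = r + S p * q := by
  choose L hL using hcomp
  set r : R := PowerSeries.mk fun j =>
    if j < p then L (fun k => coeff j (iterD p F k)) else 0 with hr
  set q : R := PowerSeries.mk fun m => L (fun k => coeff (m + p) (iterD p F k)) with hq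
  refine ⟨r, q, ?_, ?_⟩
  · intro m hm; simp [hr, coeff_mk, Nat.not_lt.mpr hm]
  · ext m
    rw [← sub_eq_zero]
    apply hhaus
    intro K
    set QK : R := ∑ k ∈ range K, (p : R) ^ k * shiftp p (iterD p F k) with hQK
    have tel := telescope1 p hp F K
    have expand : coeff m F =
        (∑ k ∈ range K, (p : Γ) ^ k * coeff m (polypart p (iterD p F k)))
        + coeff m (S p * QK) + (p : Γ) ^ K * coeff m (iterD p F K) := by
      conv_lhs => rw [tel]
      rw [map_add, map_add, map_sum, coeff_nat_pow_mul]
      congr 1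
      congr 1
      exact Finset.sum_congr rfl fun k _ => coeff_nat_pow_mul p k m _
    -- divisibility of the r-part
    have hpoly : ∀ G : R, coeff m (polypart p G) = if m < p then coeff m G else 0 := by
      intro G
      rw [polypart, map_sum]
      simp only [coeff_C_mul, coeff_X_pow, mul_ite, mul_one, mul_zero]
      rw [Finset.sum_ite_eq (range p) m (fun j => coeff j G)]
      simp
    have hrdvd : (p : Γ) ^ K ∣ coeff m r
        - ∑ k ∈ range K, (p : Γ) ^ k * coeff m (polypart p (iterD p F k)) := by
      by_cases hm : m < p
      · have : coeff m r = L (fun k => coeff m (iterD p F k)) := by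
          simp [hr, coeff_mk, hm]
        rw [this]
        have h2 : ∀ k, coeff m (polypart p (iterD p F k)) = coeff m (iterD p F k) := by
          intro k; rw [hpoly _, if_pos hm]
        simp only [h2]
        exact hL _ K
      · have h1 : coeff m r = 0 := by simp [hr, coeff_mk, hm]
        have h2 : ∀ k, coeff m (polypart p (iterD p F k)) = 0 := by
          intro k; rw [hpoly _, if_neg hm]
        simp [h1, h2]
    have hqdvd : ∀ b, (p : Γ) ^ K ∣ coeff b q - coeff b QK := by
      intro b
      have h1 : coeff b q = L (fun k => coeff (b + p) (iterD p F k)) := by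
        simp [hq, coeff_mk]
      have h2 : coeff b QK = ∑ k ∈ range K, (p : Γ) ^ k * coeff (b + p) (iterD p F k) := by
        rw [hQK, map_sum]
        exact Finset.sum_congr rfl fun k _ => by
          rw [coeff_nat_pow_mul, shiftp, coeff_mk]
      rw [h1, h2]
      exact hL _ K
    have hSq : (p : Γ) ^ K ∣ coeff m (S p * QK) - coeff m (S p * q) := by
      have : coeff m (S p * QK) - coeff m (S p * q) = coeff m (S p * (QK - q)) := by
        rw [mul_sub, map_sub]
      rw [this, coeff_mul]
      refine Finset.dvd_sum fun x _ => ?_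
      have := hqdvd x.2
      have h3 : coeff x.2 (QK - q) = -(coeff x.2 q - coeff x.2 QK) := by
        rw [map_sub]; ring
      rw [h3]
      exact Dvd.dvd.mul_left ((hqdvd x.2).neg_right) _
    have final : coeff m F - coeff m (r + S p * q) =
        -(coeff m r - ∑ k ∈ range K, (p : Γ) ^ k * coeff m (polypart p (iterD p F k)))
        + (coeff m (S p * QK) - coeff m (S p * q))
        + (p : Γ) ^ K * coeff m (iterD p F K) := by
      rw [map_add, expand]; ring
    rw [final]
    exact dvd_add (dvd_add hrdvd.neg_right hSq) (dvd_mul_right _ _)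

lemma coeff_nat_mul (m : ℕ) (G : R) : coeff m ((p : R) * G) = (p : Γ) * coeff m G := by
  simpa using coeff_nat_pow_mul p 1 m G

lemma iota_split (ι : R →+* R) (hX : ι X = (1 + X) ^ p - 1)
    (hCa : ∀ a : Γ, ι (PowerSeries.C a) = PowerSeries.C a) (h : R) (J : ℕ) :
    ι h = (∑ j ∈ range J, PowerSeries.C (coeff j h) * (S p) ^ j)
      + (S p) ^ J * ι (PowerSeries.mk fun m => coeff (m + J) h) := by
  have hdec : h = (∑ j ∈ range J, PowerSeries.C (coeff j h) * X ^ j)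
      + X ^ J * (PowerSeries.mk fun m => coeff (m + J) h) := by
    ext m
    rw [map_add, map_sum]
    simp only [coeff_C_mul, coeff_X_pow, mul_ite, mul_one, mul_zero]
    rw [Finset.sum_ite_eq (range J) m (fun j => coeff j h)]
    by_cases hm : m < J
    · rw [coeff_X_pow_mul_of_lt hm]; simp [hm]
    · rw [if_neg (by simpa using hm), zero_add, coeff_X_pow_mul',
        if_pos (Nat.le_of_not_lt hm), coeff_mk,
        show m - J + J = m from Nat.sub_add_cancel (Nat.le_of_not_lt hm)]
  conv_lhs => rw [hdec]
  rw [map_add, map_mul, map_pow, hX, map_sum]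
  have h2 : ∀ j ∈ range J, ι (PowerSeries.C (coeff j h) * X ^ j)
      = PowerSeries.C (coeff j h) * (S p) ^ j := by
    intro j _; rw [map_mul, map_pow, hX, hCa]; rfl
  rw [Finset.sum_congr rfl h2]; rfl

lemma exists_rep (hp : p.Prime)
    (hhaus : ∀ x : Γ, (∀ k : ℕ, (p : Γ) ^ k ∣ x) → x = 0)
    (hcomp : ∀ a : ℕ → Γ, ∃ L : Γ, ∀ K : ℕ,
      (p : Γ) ^ K ∣ (L - ∑ k ∈ range K, (p : Γ) ^ k * a k))
    (ι : R →+* R) (hX : ι X = (1 + X) ^ p - 1)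
    (hCa : ∀ a : Γ, ι (PowerSeries.C a) = PowerSeries.C a)
    (F : R) : ∃ g : Fin p → R, F = ∑ i : Fin p, ι (g i) * X ^ (i : ℕ) := by
  have hdiv : ∀ G : R, ∃ rq : R × R,
      (∀ m, p ≤ m → coeff m rq.1 = 0) ∧ G = rq.1 + S p * rq.2 := by
    intro G
    obtain ⟨r, q, h1, h2⟩ := division p hp hhaus hcomp G
    exact ⟨(r, q), h1, h2⟩
  choose f hf1 hf2 using hdiv
  set Q : ℕ → R := fun j => (fun G => (f G).2)^[j] F with hQdef
  have hQs : ∀ j, Q (j + 1) = (f (Q j)).2 := fun j => Function.iterate_succ_apply' _ _ _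
  set r : ℕ → R := fun j => (f (Q j)).1 with hrdef
  have hstep : ∀ j, Q j = r j + S p * Q (j + 1) := fun j => by rw [hQs j]; exact hf2 (Q j)
  have tele : ∀ J, F = (∑ j ∈ range J, (S p) ^ j * r j) + (S p) ^ J * Q J := by
    intro J; induction J with
    | zero => simp [hQdef]
    | succ J ih =>
      rw [Finset.sum_range_succ]
      linear_combination ih + (S p) ^ J * hstep J
  refine ⟨fun i => PowerSeries.mk fun j => coeff (i : ℕ) (r j), ?_⟩
  ext m
  set J := m + 1 with hJ
  have hsplit : ∀ i : Fin p,
      ι (PowerSeries.mk fun j => coeff (i : ℕ) (r j))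
        = (∑ j ∈ range J, PowerSeries.C (coeff (i : ℕ) (r j)) * (S p) ^ j)
          + (S p) ^ J * ι (PowerSeries.mk fun m' => coeff (i : ℕ) (r (m' + J))) := by
    intro i
    have h3 := iota_split p ι hX hCa (PowerSeries.mk fun j => coeff (i : ℕ) (r j)) J
    simpa only [coeff_mk] using h3
  have hrpoly : ∀ j, (∑ i : Fin p, PowerSeries.C (coeff (i : ℕ) (r j)) * X ^ (i : ℕ))
      = r j := by
    intro j
    ext m'
    rw [map_sum]
    simp only [coeff_C_mul, coeff_X_pow, mul_ite, mul_one, mul_zero]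
    rw [Fin.sum_univ_eq_sum_range (fun i => if m' = i then coeff i (r j) else 0) p,
      Finset.sum_ite_eq (range p) m' (fun i => coeff i (r j))]
    by_cases hm' : m' < p
    · simp [hm']
    · simp only [mem_range, hm', if_false]
      exact (hf1 (Q j) m' (by omega)).symm
  have hRHS : (∑ i : Fin p, ι (PowerSeries.mk fun j => coeff (i : ℕ) (r j)) * X ^ (i : ℕ))
      = (∑ j ∈ range J, (S p) ^ j * r j)
        + (S p) ^ J * (∑ i : Fin p,
            ι (PowerSeries.mk fun m' => coeff (i : ℕ) (r (m' + J))) * X ^ (i : ℕ)) := by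
    calc (∑ i : Fin p, ι (PowerSeries.mk fun j => coeff (i : ℕ) (r j)) * X ^ (i : ℕ))
        = ∑ i : Fin p, ((∑ j ∈ range J,
              (S p) ^ j * (PowerSeries.C (coeff (i : ℕ) (r j)) * X ^ (i : ℕ)))
            + (S p) ^ J * (ι (PowerSeries.mk fun m' => coeff (i : ℕ) (r (m' + J)))
                * X ^ (i : ℕ))) := by
          refine Finset.sum_congr rfl fun i _ => ?_
          rw [hsplit i, add_mul, Finset.sum_mul]
          congr 1
          · exact Finset.sum_congr rfl fun j _ => by ring
          · ring
      _ = (∑ i : Fin p, ∑ j ∈ range J,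
              (S p) ^ j * (PowerSeries.C (coeff (i : ℕ) (r j)) * X ^ (i : ℕ)))
          + (S p) ^ J * (∑ i : Fin p,
              ι (PowerSeries.mk fun m' => coeff (i : ℕ) (r (m' + J))) * X ^ (i : ℕ)) := by
          rw [Finset.sum_add_distrib, Finset.mul_sum]
      _ = _ := by
          congr 1
          rw [Finset.sum_comm]
          refine Finset.sum_congr rfl fun j _ => ?_
          rw [← Finset.mul_sum, hrpoly j]
  rw [hRHS, map_add, coeff_S_pow_mul p (show m < J from by omega), add_zero]
  have h1 := congrArg (coeff m) (tele J)
  rw [map_add, coeff_S_pow_mul p (show m < J from by omega), add_zero] at h1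
  exact h1

lemma apow (x y : R) : ∀ j : ℕ, ∃ z, (x + (p : R) * y) ^ j = x ^ j + (p : R) * z := by
  intro j; induction j with
  | zero => exact ⟨0, by simp⟩
  | succ j ih =>
    obtain ⟨z, hz⟩ := ih
    refine ⟨z * x + x ^ j * y + (p : R) * (z * y), ?_⟩
    rw [pow_succ, hz, pow_succ]; ring

lemma modp (hp : p.Prime)
    (ι : R →+* R) (hX : ι X = (1 + X) ^ p - 1)
    (hCa : ∀ a : Γ, ι (PowerSeries.C a) = PowerSeries.C a)
    (hcont : ∀ m : ℕ, ∃ N : ℕ, ∀ g : R, X ^ N ∣ g → X ^ m ∣ ι g)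
    (g : R) (m : ℕ) :
    (p : Γ) ∣ coeff m (ι g) - (if p ∣ m then coeff (m / p) g else 0) := by
  obtain ⟨N, hN⟩ := hcont (m + 1)
  set M := max N (m + 1) with hM
  set tail : R := PowerSeries.mk fun m' => coeff (m' + M) g with htl
  have hsplit := iota_split p ι hX hCa g M
  have htail : coeff m ((S p) ^ M * ι tail) = 0 := by
    have h1 : (S p) ^ M * ι tail = ι (X ^ M * tail) := by
      rw [map_mul, map_pow, hX]; rfl
    rw [h1]
    obtain ⟨u, hu⟩ := hN (X ^ M * tail)
      ⟨X ^ (M - N) * tail, by rw [← mul_assoc, ← pow_add,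
        Nat.add_sub_cancel' (le_max_left N (m + 1))]⟩
    rw [hu]
    exact coeff_X_pow_mul_of_lt (by omega) u
  have hmain : coeff m (ι g) = ∑ j ∈ range M, coeff j g * coeff m ((S p) ^ j) := by
    rw [hsplit, map_add, ← htl, htail, add_zero, map_sum]
    exact Finset.sum_congr rfl fun j _ => coeff_C_mul _ _ _
  choose z hz using fun j : ℕ => apow p (X ^ p : R) (bigD p) j
  have hSj : ∀ j, coeff m ((S p) ^ j)
      = coeff m (X ^ (p * j)) + (p : Γ) * coeff m (z j) := by
    intro j
    rw [sd p hp, hz j, map_add, pow_mul, coeff_nat_mul]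
  have hfirst : ∑ j ∈ range M, coeff j g * coeff m (X ^ (p * j))
      = (if p ∣ m then coeff (m / p) g else 0) := by
    simp only [coeff_X_pow]
    by_cases hd : p ∣ m
    · obtain ⟨m', rfl⟩ := hd
      rw [if_pos (Dvd.intro m' rfl)]
      have hmem : m' ∈ range M := by
        have : m' ≤ p * m' := Nat.le_mul_of_pos_left m' hp.pos
        simp only [mem_range]; omega
      rw [Finset.sum_eq_single_of_mem m' hmem]
      · rw [if_pos rfl, mul_one, Nat.mul_div_cancel_left m' hp.pos]
      · intro j _ hj
        rw [if_neg, mul_zero]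
        intro hc
        exact hj (Nat.eq_of_mul_eq_mul_left hp.pos hc.symm)
    · rw [if_neg hd, Finset.sum_eq_zero]
      intro j _
      rw [if_neg, mul_zero]
      intro hc
      exact hd ⟨j, hc⟩
  rw [hmain]
  simp only [hSj]
  have hdist : ∑ j ∈ range M, coeff j g * (coeff m (X ^ (p * j)) + (p : Γ) * coeff m (z j))
      = (∑ j ∈ range M, coeff j g * coeff m (X ^ (p * j)))
        + (p : Γ) * ∑ j ∈ range M, coeff j g * coeff m (z j) := by
    rw [Finset.mul_sum, ← Finset.sum_add_distrib]
    exact Finset.sum_congr rfl fun j _ => by ring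
  rw [hdist, hfirst, add_sub_cancel_left]
  exact dvd_mul_right _ _

lemma uniq_aux (hp : p.Prime)
    (hnz : ∀ x : Γ, (p : Γ) * x = 0 → x = 0)
    (ι : R →+* R) (hX : ι X = (1 + X) ^ p - 1)
    (hCa : ∀ a : Γ, ι (PowerSeries.C a) = PowerSeries.C a)
    (hcont : ∀ m : ℕ, ∃ N : ℕ, ∀ g : R, X ^ N ∣ g → X ^ m ∣ ι g) :
    ∀ K : ℕ, ∀ g : Fin p → R, (∑ i : Fin p, ι (g i) * X ^ (i : ℕ)) = 0 →
      ∀ (i : Fin p) (m : ℕ), (p : Γ) ^ K ∣ coeff m (g i) := by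
  intro K
  induction K with
  | zero => intro g _ i m; simpa using one_dvd _
  | succ K IH =>
    intro g hg
    have step1 : ∀ (i : Fin p) (m : ℕ), (p : Γ) ∣ coeff m (g i) := by
      intro i m
      have h0 : coeff (p * m + i) (∑ i' : Fin p, ι (g i') * X ^ (i' : ℕ)) = 0 := by
        rw [hg]; simp
      rw [map_sum] at h0
      simp only [coeff_mul_X_pow'] at h0
      have key : ∀ i' : Fin p, (p : Γ) ∣
          (if (i' : ℕ) ≤ p * m + i then coeff (p * m + i - i') (ι (g i')) else 0)
          - (if i' = i then coeff m (g i) else 0) := by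
        intro i'
        by_cases hii : i' = i
        · subst hii
          rw [if_pos (by omega), if_pos rfl]
          have h2 := modp p hp ι hX hCa hcont (g i') (p * m + i' - i')
          rw [show p * m + (i' : ℕ) - (i' : ℕ) = p * m from by omega,
            if_pos (dvd_mul_right p m), Nat.mul_div_cancel_left m hp.pos] at h2
          rw [show p * m + (i' : ℕ) - (i' : ℕ) = p * m from by omega]
          exact h2
        · rw [if_neg hii, sub_zero]
          by_cases hle : (i' : ℕ) ≤ p * m + i
          · rw [if_pos hle]
            have h2 := modp p hp ι hX hCa hcont (g i') (p * m + i - i')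
            have hnd : ¬ p ∣ (p * m + (i : ℕ) - (i' : ℕ)) := by
              rintro ⟨c, hc⟩
              have h1 : (i' : ℕ) + p * c = (i : ℕ) + p * m := by omega
              have h3 : (i' : ℕ) % p = (i : ℕ) % p := by
                calc (i' : ℕ) % p = ((i' : ℕ) + p * c) % p :=
                      (Nat.add_mul_mod_self_left _ _ _).symm
                  _ = ((i : ℕ) + p * m) % p := by rw [h1]
                  _ = (i : ℕ) % p := Nat.add_mul_mod_self_left _ _ _
              have h4 : (i' : ℕ) = (i : ℕ) := by
                rwa [Nat.mod_eq_of_lt i'.isLt, Nat.mod_eq_of_lt i.isLt] at h3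
              exact hii (Fin.ext h4)
            rw [if_neg hnd, sub_zero] at h2
            exact h2
          · rw [if_neg hle]
            exact dvd_zero _
      have hsum : (p : Γ) ∣
          (∑ i' : Fin p, (if (i' : ℕ) ≤ p * m + i then
              coeff (p * m + i - i') (ι (g i')) else 0))
          - (∑ i' : Fin p, if i' = i then coeff m (g i) else 0) := by
        rw [← Finset.sum_sub_distrib]
        exact Finset.dvd_sum fun i' _ => key i'
      rw [h0, Finset.sum_ite_eq' Finset.univ i (fun _ => coeff m (g i)),
        if_pos (Finset.mem_univ i), zero_sub] at hsum
      exact (dvd_neg.mp hsum)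
    choose h hh using step1
    set G : Fin p → R := fun i => PowerSeries.mk (fun m => h i m) with hG
    have hgG : ∀ i, g i = (p : R) * G i := by
      intro i; ext m
      rw [coeff_nat_mul, hG, coeff_mk]
      exact hh i m
    have hG0 : (∑ i : Fin p, ι (G i) * X ^ (i : ℕ)) = 0 := by
      have hmul : (p : R) * (∑ i : Fin p, ι (G i) * X ^ (i : ℕ)) = 0 := by
        rw [Finset.mul_sum, ← hg]
        refine Finset.sum_congr rfl fun i _ => ?_
        rw [hgG i, map_mul, map_natCast]
        ring
      ext m
      have h5 := congrArg (coeff m) hmul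
      rw [coeff_nat_mul, map_zero] at h5
      rw [map_zero]
      exact hnz _ h5
    intro i m
    obtain ⟨c, hc⟩ := IH G hG0 i m
    refine ⟨c, ?_⟩
    rw [hh i m]
    have h6 : coeff m (G i) = h i m := coeff_mk _ _
    rw [← h6, hc, pow_succ]
    ring

lemma uniq (hp : p.Prime)
    (hnz : ∀ x : Γ, (p : Γ) * x = 0 → x = 0)
    (hhaus : ∀ x : Γ, (∀ k : ℕ, (p : Γ) ^ k ∣ x) → x = 0)
    (ι : R →+* R) (hX : ι X = (1 + X) ^ p - 1)
    (hCa : ∀ a : Γ, ι (PowerSeries.C a) = PowerSeries.C a)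
    (hcont : ∀ m : ℕ, ∃ N : ℕ, ∀ g : R, X ^ N ∣ g → X ^ m ∣ ι g)
    (g : Fin p → R) (hg : (∑ i : Fin p, ι (g i) * X ^ (i : ℕ)) = 0) : ∀ i, g i = 0 := by
  intro i
  ext m
  rw [map_zero]
  exact hhaus _ fun K => uniq_aux p hp hnz ι hX hCa hcont K g hg i m

lemma finale [Nontrivial Γ] (hp : p.Prime) (A : Subring R)
    (B : Module.Basis (Fin p) A R) (hB : ∀ i : Fin p, (B i : R) = (1 + X : R) ^ (i : ℕ))
    (v vinv : A) (hv : (v : R) = (1 + X : R) ^ p) (hvinv : v * vinv = 1) :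
    Module.Finite A R ∧ Module.Free A R ∧ Module.finrank A R = p ∧
    (∃ t : R →ₗ[A] A,
      (∀ x : R, (p : A) * t x = Algebra.trace A R x) ∧
      (∀ φ : R →ₗ[A] A, ∃! b : R, ∀ x, φ x = t (b * x))) := by
  classical
  have hp2 : 2 ≤ p := hp.two_le
  haveI : NeZero p := ⟨hp.pos.ne'⟩
  haveI : Nontrivial A :=
    ⟨⟨0, 1, fun h => zero_ne_one (α := R) (by simpa using congrArg Subtype.val h)⟩⟩
  have hsmul : ∀ (a : A) (y : R), a • y = (a : R) * y := fun a y => rfl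
  have hrepr : ∀ (m : ℕ), m < 3 * p → ∀ (j : Fin p),
      B.repr ((1 + X : R) ^ m) j =
        (if m = (j : ℕ) then 1 else 0) + (if m = p + (j : ℕ) then v else 0)
          + (if m = 2 * p + (j : ℕ) then v * v else 0) := by
    intro m hm j
    rcases lt_or_ge m p with h1 | h1
    · rw [show ((1 + X : R)) ^ m = B ⟨m, h1⟩ from (hB ⟨m, h1⟩).symm,
        Module.Basis.repr_self, Finsupp.single_apply]
      simp only [Fin.ext_iff]
      have hj := j.isLt
      split_ifs <;> first | omega | ring
    rcases lt_or_ge m (2 * p) with h2 | h2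
    · have key : ((1 + X : R)) ^ m = v • B ⟨m - p, by omega⟩ := by
        rw [hsmul, hv, hB, ← pow_add, show p + (m - p) = m from by omega]
      rw [key, map_smul, Finsupp.smul_apply, Module.Basis.repr_self, Finsupp.single_apply,
        smul_eq_mul]
      simp only [Fin.ext_iff]
      have hj := j.isLt
      split_ifs <;> first | omega | ring
    · have key : ((1 + X : R)) ^ m = (v * v) • B ⟨m - 2 * p, by omega⟩ := by
        rw [hsmul, Subring.coe_mul, hv, hB]
        simp only [Fin.val_mk]
        rw [← pow_add, ← pow_add, show p + p + (m - 2 * p) = m from by omega]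
      rw [key, map_smul, Finsupp.smul_apply, Module.Basis.repr_self, Finsupp.single_apply,
        smul_eq_mul]
      simp only [Fin.ext_iff]
      have hj := j.isLt
      split_ifs <;> first | omega | ring
  set last : Fin p := ⟨p - 1, by omega⟩ with hlast
  set t : R →ₗ[A] A := (B.coord last).comp (LinearMap.mulLeft A ((1 + X : R) ^ (p - 1)))
    with htdef
  have ht : ∀ m : ℕ, m ≤ 2 * p - 2 → t ((1 + X : R) ^ m)
      = (if m = 0 then 1 else 0) + (if m = p then v else 0) := by
    intro m hm
    have h0 : t ((1 + X : R) ^ m) = B.repr ((1 + X : R) ^ (p - 1 + m)) last := by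
      rw [htdef, LinearMap.comp_apply, LinearMap.mulLeft_apply, ← pow_add,
        Module.Basis.coord_apply]
    rw [h0, hrepr (p - 1 + m) (by omega) last]
    have hl : (last : ℕ) = p - 1 := rfl
    rw [hl]
    split_ifs <;> first | omega | ring
  have hmb : ∀ (c : R) (i : Fin p), t (c * (1 + X : R) ^ (i : ℕ))
      = ∑ k : Fin p, B.repr c k *
        ((if (k : ℕ) + (i : ℕ) = 0 then 1 else 0)
          + (if (k : ℕ) + (i : ℕ) = p then v else 0)) := by
    intro c i
    conv_lhs => rw [← Module.Basis.sum_repr B c]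
    rw [Finset.sum_mul, map_sum]
    refine Finset.sum_congr rfl fun k _ => ?_
    rw [hB k, smul_mul_assoc, ← pow_add, map_smul, smul_eq_mul,
      ht ((k : ℕ) + (i : ℕ)) (by have := k.isLt; have := i.isLt; omega)]
  refine ⟨Module.Finite.of_basis B, Module.Free.of_basis B, ?_, ?_⟩
  · rw [Module.finrank_eq_card_basis B, Fintype.card_fin]
  refine ⟨t, ?_, ?_⟩
  · -- trace
    have htr : ∀ j : Fin p, Algebra.trace A R (B j) = if j = 0 then (p : A) else 0 := by
      intro j
      rw [Algebra.trace_eq_matrix_trace B (B j), Matrix.trace]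
      have hd : ∀ k : Fin p, (Algebra.leftMulMatrix B (B j)).diag k
          = (if j = 0 then 1 else 0) := by
        intro k
        rw [Matrix.diag_apply, Algebra.leftMulMatrix_eq_repr_mul, hB j, hB k, ← pow_add,
          hrepr ((j : ℕ) + (k : ℕ)) (by have := j.isLt; have := k.isLt; omega) k]
        simp only [Fin.ext_iff, Fin.val_zero]
        have hj := j.isLt
        split_ifs <;> first | omega | ring
      rw [Finset.sum_congr rfl (fun k _ => hd k)]
      by_cases hj : j = 0
      · simp [hj, Finset.card_univ, mul_comm]
      · simp [hj]
    have heq : ((p : A) • t) = Algebra.trace A R := by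
      apply Module.Basis.ext B
      intro j
      rw [LinearMap.smul_apply, htr j, hB j, smul_eq_mul,
        ht (j : ℕ) (by have := j.isLt; omega)]
      by_cases hj : j = 0
      · rw [if_pos hj, if_pos (by simp [hj]), if_neg (by have := j.isLt; omega)]
        ring
      · rw [if_neg hj, if_neg (fun h => hj (Fin.ext (by rw [h, Fin.val_zero]))),
          if_neg (by have := j.isLt; omega)]
        ring
    intro x
    rw [← heq, LinearMap.smul_apply, smul_eq_mul]
  · -- generator
    intro φ
    set z0 : Fin p := ⟨0, hp.pos⟩ with hz0
    have hzv : (z0 : ℕ) = 0 := rfl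
    set γ : Fin p → A := fun k => if k = z0 then φ 1 else vinv * φ ((1 + X : R) ^ (p - (k : ℕ)))
      with hγ
    set b : R := ∑ k : Fin p, (γ k : R) * (1 + X : R) ^ (k : ℕ) with hbdef
    have hb : ∀ x, φ x = t (b * x) := by
      have heq : φ = t.comp (LinearMap.mulLeft A b) := by
        apply Module.Basis.ext B
        intro i
        rw [LinearMap.comp_apply, LinearMap.mulLeft_apply, hB i, hbdef,
          Finset.sum_mul, map_sum]
        have hterm : ∀ k : Fin p, t ((γ k : R) * (1 + X : R) ^ (k : ℕ) * (1 + X : R) ^ (i : ℕ))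
            = γ k * ((if (k : ℕ) + (i : ℕ) = 0 then 1 else 0)
                + (if (k : ℕ) + (i : ℕ) = p then v else 0)) := by
          intro k
          rw [mul_assoc, ← pow_add, ← hsmul (γ k), map_smul, smul_eq_mul,
            ht ((k : ℕ) + (i : ℕ)) (by have := k.isLt; have := i.isLt; omega)]
        rw [Finset.sum_congr rfl (fun k _ => hterm k)]
        by_cases hi : (i : ℕ) = 0
        · have hi' : i = z0 := Fin.ext (by rw [hi, hzv])
          subst hi'
          rw [Finset.sum_eq_single z0]
          · simp only [hγ]
            have h00 : ¬ (0 + 0 = p) := by omega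
            simp [h00, hzv, Fin.ext_iff]
          · intro k _ hk
            have hkz : (k : ℕ) ≠ 0 := fun h => hk (Fin.ext (by rw [h, hzv]))
            rw [if_neg (by omega), if_neg (by have := k.isLt; omega)]
            ring
          · intro h; exact absurd (Finset.mem_univ z0) h
        · set k0 : Fin p := ⟨p - (i : ℕ), by omega⟩ with hk0
          have hk0v : (k0 : ℕ) = p - (i : ℕ) := rfl
          rw [Finset.sum_eq_single k0]
          · have hcond : (k0 : ℕ) + (i : ℕ) = p := by
              have := i.isLt; omega
            rw [if_neg (by rw [hcond]; omega), if_pos hcond]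
            simp only [hγ]
            have hk0ne : k0 ≠ z0 := by
              intro h
              have : (k0 : ℕ) = 0 := by rw [h, hzv]
              have := i.isLt; omega
            simp only [if_neg hk0ne]
            have hii : p - ((k0 : ℕ)) = (i : ℕ) := by
              have := i.isLt; omega
            rw [hii]
            calc φ ((1 + X : R) ^ (i : ℕ))
                = φ ((1 + X : R) ^ (i : ℕ)) * (v * vinv) := by rw [hvinv, mul_one]
              _ = (vinv * φ ((1 + X : R) ^ (i : ℕ))) * (0 + v) := by ring
          · intro k _ hk
            have hkne : (k : ℕ) ≠ p - (i : ℕ) := by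
              intro h
              exact hk (Fin.ext (by rw [h, hk0v]))
            rw [if_neg (by have := i.isLt; omega),
              if_neg (by have := k.isLt; have := i.isLt; omega)]
            ring
          · intro h; exact absurd (Finset.mem_univ k0) h
      intro x
      rw [heq]
      rfl
    refine ⟨b, hb, ?_⟩
    intro b' hb'
    have hdiff : ∀ x : R, t ((b' - b) * x) = 0 := fun x => by
      rw [sub_mul, map_sub, ← hb' x, ← hb x, sub_self]
    have hrep0 : ∀ k : Fin p, B.repr (b' - b) k = 0 := by
      intro k
      by_cases hk : (k : ℕ) = 0
      · have h1 := hdiff ((1 + X : R) ^ ((z0 : Fin p) : ℕ))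
        rw [hmb (b' - b) z0] at h1
        rw [Finset.sum_eq_single z0] at h1
        · have hk' : k = z0 := Fin.ext (by rw [hk, hzv])
          subst hk'
          rw [if_pos (by omega), if_neg (by omega)] at h1
          calc B.repr (b' - b) z0 = B.repr (b' - b) z0 * (1 + 0) := by ring
            _ = 0 := h1
        · intro k' _ hk'
          have hkz : (k' : ℕ) ≠ 0 := fun h => hk' (Fin.ext (by rw [h, hzv]))
          rw [if_neg (by omega), if_neg (by have := k'.isLt; omega)]
          ring
        · intro h; exact absurd (Finset.mem_univ z0) h
      · set i : Fin p := ⟨p - (k : ℕ), by omega⟩ with hi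
        have hiv : (i : ℕ) = p - (k : ℕ) := rfl
        have h1 := hdiff ((1 + X : R) ^ (i : ℕ))
        rw [hmb (b' - b) i] at h1
        rw [Finset.sum_eq_single k] at h1
        · have hcond : (k : ℕ) + (i : ℕ) = p := by
            have := k.isLt; omega
          rw [if_neg (by rw [hcond]; omega), if_pos hcond] at h1
          have h2 : B.repr (b' - b) k * v = 0 := by
            calc B.repr (b' - b) k * v = B.repr (b' - b) k * (0 + v) := by ring
              _ = 0 := h1
          calc B.repr (b' - b) k = B.repr (b' - b) k * (v * vinv) := by rw [hvinv, mul_one]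
            _ = (B.repr (b' - b) k * v) * vinv := by ring
            _ = 0 := by rw [h2]; ring
        · intro k' _ hk'
          have hkne : (k' : ℕ) ≠ (k : ℕ) := fun h => hk' (Fin.ext h)
          rw [if_neg (by have := k'.isLt; have := k.isLt; omega),
            if_neg (by have := k'.isLt; have := k.isLt; omega)]
          ring
        · intro h; exact absurd (Finset.mem_univ k) h
    have hzero : b' - b = 0 := by
      calc b' - b = ∑ k : Fin p, B.repr (b' - b) k • B k := (Module.Basis.sum_repr B (b' - b)).symm
        _ = 0 := by
          rw [Finset.sum_congr rfl (fun k _ => by rw [hrep0 k, zero_smul])]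
          simp
    exact sub_eq_zero.mp hzero

theorem main [Nontrivial Γ] (hp : p.Prime)
    (hnz : ∀ x : Γ, (p : Γ) * x = 0 → x = 0)
    (hhaus : ∀ x : Γ, (∀ k : ℕ, (p : Γ) ^ k ∣ x) → x = 0)
    (hcomp : ∀ a : ℕ → Γ, ∃ L : Γ, ∀ K : ℕ,
      (p : Γ) ^ K ∣ (L - ∑ k ∈ range K, (p : Γ) ^ k * a k))
    (ι : R →+* R) (hX : ι X = (1 + X) ^ p - 1)
    (hCa : ∀ a : Γ, ι (PowerSeries.C a) = PowerSeries.C a)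
    (hcont : ∀ m : ℕ, ∃ N : ℕ, ∀ g : R, X ^ N ∣ g → X ^ m ∣ ι g) :
    Module.Finite ι.range R ∧ Module.Free ι.range R ∧ Module.finrank ι.range R = p ∧
    (∃ t : R →ₗ[ι.range] ι.range,
      (∀ x : R, (p : ι.range) * t x = Algebra.trace ι.range R x) ∧
      (∀ φ : R →ₗ[ι.range] ι.range, ∃! b : R, ∀ x, φ x = t (b * x))) := by
  classical
  set A : Subring R := ι.range with hA
  have hsm : ∀ (a : A) (y : R), a • y = (a : R) * y := fun a y => rfl
  have hXind : ∀ c : Fin p → A, (∑ i : Fin p, (c i : R) * X ^ (i : ℕ)) = 0 → ∀ i, c i = 0 := by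
    intro c hc i
    have hg : ∀ i : Fin p, ∃ g : R, ι g = (c i : R) := fun i => (c i).2
    choose g hgc using hg
    have hsum : (∑ i : Fin p, ι (g i) * X ^ (i : ℕ)) = 0 := by
      rw [Finset.sum_congr rfl fun i _ => by rw [hgc i]]
      exact hc
    have hz := uniq p hp hnz hhaus ι hX hCa hcont g hsum i
    exact Subtype.ext (by rw [← hgc i, hz, map_zero]; rfl)
  set W : Fin p → R := fun i => (1 + X : R) ^ (i : ℕ) with hW
  have hbin : ∀ i : Fin p, W i = ∑ j : Fin p, (((i : ℕ).choose (j : ℕ) : ℕ) : R) * X ^ (j : ℕ) := by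
    intro i
    have h1 : W i = ∑ k ∈ range ((i : ℕ) + 1), (X : R) ^ k * ((i : ℕ).choose k : ℕ) := by
      show (1 + X : R) ^ (i : ℕ) = _
      rw [add_comm (1 : R) X, add_pow]
      exact Finset.sum_congr rfl fun k _ => by rw [one_pow, mul_one]
    have h2 : ∑ k ∈ range ((i : ℕ) + 1), (X : R) ^ k * ((i : ℕ).choose k : ℕ)
        = ∑ k ∈ range p, (X : R) ^ k * ((i : ℕ).choose k : ℕ) := by
      apply Finset.sum_subset
      · exact Finset.range_subset_range.mpr (by have := i.isLt; omega)
      · intro k _ hk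
        rw [Nat.choose_eq_zero_of_lt (by simp only [mem_range] at hk ⊢; omega)]
        simp
    rw [h1, h2, ← Fin.sum_univ_eq_sum_range (fun k => (X : R) ^ k * ((i : ℕ).choose k : ℕ)) p]
    exact Finset.sum_congr rfl fun j _ => by ring
  have hWspan : ⊤ ≤ Submodule.span A (Set.range W) := by
    have hXmem : ∀ i : Fin p, (X : R) ^ (i : ℕ) ∈ Submodule.span A (Set.range W) := by
      intro i
      have hexp : (X : R) ^ (i : ℕ) = ∑ m ∈ range ((i : ℕ) + 1),
          (-1 : R) ^ (m + (i : ℕ)) * (1 + X : R) ^ m * (1 : R) ^ ((i : ℕ) - m)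
            * ((i : ℕ).choose m : ℕ) := by
        have := sub_pow ((1 + X : R)) (1 : R) (i : ℕ)
        rw [← this]
        congr 1
        ring
      rw [hexp]
      apply Submodule.sum_mem
      intro m hm
      have hmlt : m < p := by
        simp only [mem_range] at hm
        have := i.isLt; omega
      set a : A := (-1 : A) ^ (m + (i : ℕ)) * (((i : ℕ).choose m : ℕ) : A) with ha
      have hca : ((a : A) : R) = (-1 : R) ^ (m + (i : ℕ)) * (((i : ℕ).choose m : ℕ) : R) := by
        rw [ha]
        push_cast
        ring
      have hterm : (-1 : R) ^ (m + (i : ℕ)) * (1 + X : R) ^ m * (1 : R) ^ ((i : ℕ) - m)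
            * ((i : ℕ).choose m : ℕ)
          = ((a : A) : R) * W ⟨m, hmlt⟩ := by
        rw [hca]
        show _ = _ * (1 + X : R) ^ ((⟨m, hmlt⟩ : Fin p) : ℕ)
        simp only [Fin.val_mk]
        ring
      rw [hterm, ← hsm]
      exact Submodule.smul_mem _ _ (Submodule.subset_span ⟨⟨m, hmlt⟩, rfl⟩)
    intro F _
    obtain ⟨g, hgF⟩ := exists_rep p hp hhaus hcomp ι hX hCa F
    rw [hgF]
    apply Submodule.sum_mem
    intro i _
    have : ι (g i) * X ^ (i : ℕ) = (⟨ι (g i), ⟨g i, rfl⟩⟩ : A) • (X : R) ^ (i : ℕ) := by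
      rw [hsm]
    rw [this]
    exact Submodule.smul_mem _ _ (hXmem i)
  have hWind : LinearIndependent A W := by
    rw [Fintype.linearIndependent_iff]
    intro c hc
    set e : Fin p → A := fun j => ∑ i : Fin p, (((i : ℕ).choose (j : ℕ) : ℕ) : A) * c i
      with he
    have hcoe : ∀ j : Fin p, ((e j : A) : R)
        = ∑ i : Fin p, (((i : ℕ).choose (j : ℕ) : ℕ) : R) * ((c i : A) : R) := by
      intro j
      rw [he]
      push_cast
      rfl
    have hconv : (∑ j : Fin p, ((e j : A) : R) * X ^ (j : ℕ)) = 0 := by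
      have h3 : (∑ j : Fin p, ((e j : A) : R) * X ^ (j : ℕ))
          = ∑ i : Fin p, ((c i : A) : R) * W i := by
        calc (∑ j : Fin p, ((e j : A) : R) * X ^ (j : ℕ))
            = ∑ j : Fin p, ∑ i : Fin p,
                (((i : ℕ).choose (j : ℕ) : ℕ) : R) * ((c i : A) : R) * X ^ (j : ℕ) := by
              refine Finset.sum_congr rfl fun j _ => ?_
              rw [hcoe j, Finset.sum_mul]
          _ = ∑ i : Fin p, ∑ j : Fin p,
                (((i : ℕ).choose (j : ℕ) : ℕ) : R) * ((c i : A) : R) * X ^ (j : ℕ) :=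
              Finset.sum_comm
          _ = ∑ i : Fin p, ((c i : A) : R) * W i := by
              refine Finset.sum_congr rfl fun i _ => ?_
              rw [hbin i, Finset.mul_sum]
              refine Finset.sum_congr rfl fun j _ => by ring
      rw [h3, ← hc]
      exact Finset.sum_congr rfl fun i _ => (hsm (c i) (W i)).symm
  -- from X-independence, all e j = 0
    have he0 : ∀ j, e j = 0 := hXind e hconv
    intro i
    by_contra hne
    have hTne : (Finset.univ.filter (fun i => c i ≠ 0)).Nonempty := ⟨i, by simp [hne]⟩
    set i0 := (Finset.univ.filter (fun i => c i ≠ 0)).max' hTne with hi0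
    have hi0mem := Finset.max'_mem _ hTne
    have hi0ne : c i0 ≠ 0 := by
      have := hi0mem
      simp only [Finset.mem_filter] at this
      exact this.2
    have hei0 : e i0 = c i0 := by
      simp only [he]
      rw [Finset.sum_eq_single i0]
      · rw [Nat.choose_self]
        simp
      · intro i' _ hi'
        rcases lt_or_gt_of_ne hi' with hlt | hgt
        · rw [Nat.choose_eq_zero_of_lt hlt]
          simp
        · have hz : c i' = 0 := by
            by_contra h
            exact absurd (Finset.le_max' _ _ (by simp [h])) (not_le.mpr hgt)
          rw [hz, mul_zero]
      · intro h; exact absurd (Finset.mem_univ i0) h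
    rw [he0 i0] at hei0
    exact hi0ne hei0.symm
  set B : Module.Basis (Fin p) A R := Module.Basis.mk hWind hWspan with hBdef
  have hBW : ∀ i : Fin p, (B i : R) = (1 + X : R) ^ (i : ℕ) := by
    intro i
    rw [hBdef, Module.Basis.mk_apply]
  have hιadd : ι (1 + X) = (1 + X : R) ^ p := by
    rw [map_add, map_one, hX]
    ring
  have hv1 : ((1 + X : R)) ^ p ∈ A := ⟨1 + X, hιadd⟩
  set v : A := ⟨(1 + X : R) ^ p, hv1⟩ with hvdef
  set u : R := PowerSeries.invOfUnit (1 + X) 1 with hudef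
  have hu1 : (1 + X : R) * u = 1 := PowerSeries.mul_invOfUnit _ _ (by simp)
  set vinv : A := ⟨ι u, ⟨u, rfl⟩⟩ with hvinvdef
  have hvv : v * vinv = 1 := by
    apply Subtype.ext
    show ((1 + X : R)) ^ p * ι u = 1
    rw [← hιadd, ← map_mul, hu1, map_one]
  exact finale p hp A B hBW v vinv rfl hvv

end

end InvDiffAux

open PowerSeries

theorem inverse_different_ordinary
    (p : ℕ) [Fact p.Prime] (n : ℕ) (hn : 1 ≤ n)
    (O : Type) [CommRing O] [IsDomain O] [IsDiscreteValuationRing O]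
    [IsAdicComplete (IsLocalRing.maximalIdeal O) O]
    -- p is a uniformizer of O
    (hunif : Irreducible (p : O)) :
    -- O' = O[ζ_{p^n}]
    let O' := AdjoinRoot (Polynomial.cyclotomic (p ^ n) O)
    ∀ (ι : PowerSeries O' →+* PowerSeries O'),
      ι PowerSeries.X = (1 + PowerSeries.X) ^ p - 1 →
      (∀ a : O', ι (PowerSeries.C (R := O') a) = PowerSeries.C (R := O') a) →
      (∀ m : ℕ, ∃ N : ℕ, ∀ g : PowerSeries O',
        PowerSeries.X ^ N ∣ g → PowerSeries.X ^ m ∣ ι g) →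
      -- A = O'[[T_{n-1}]] sitting inside R = O'[[T_n]]
      ∀ A : Subring (PowerSeries O'), A = ι.range →
        -- the extension is finite free of rank p
        Module.Finite A (PowerSeries O') ∧
        Module.Free A (PowerSeries O') ∧
        Module.finrank A (PowerSeries O') = p ∧
        -- Hom_A(B, A) is free of rank one, generated by t = (1/p)·Tr
        (∃ t : PowerSeries O' →ₗ[A] A,
          (∀ x : PowerSeries O',
            (p : A) * t x = Algebra.trace A (PowerSeries O') x) ∧
          (∀ φ : PowerSeries O' →ₗ[A] A,
            ∃! b : PowerSeries O', ∀ x, φ x = t (b * x))) := by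
  intro O' ι hι1 hι2 hι3 A hA
  subst hA
  classical
  have hp : p.Prime := Fact.out
  have hpO : (p : O) ≠ 0 := hunif.ne_zero
  have hmax : IsLocalRing.maximalIdeal O = Ideal.span {(p : O)} := hunif.maximalIdeal_eq
  have hadic : IsAdicComplete (Ideal.span {(p : O)}) O := hmax ▸ inferInstance
  have hmonic : (Polynomial.cyclotomic (p ^ n) O).Monic := Polynomial.cyclotomic.monic _ O
  set pb : PowerBasis O O' := AdjoinRoot.powerBasis' hmonic with hpbdef
  set bO : Module.Basis (Fin pb.dim) O O' := pb.basis with hbOdef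
  have hdim : 0 < pb.dim := by
    have h1 : pb.dim = (Polynomial.cyclotomic (p ^ n) O).natDegree := rfl
    rw [h1, Polynomial.natDegree_cyclotomic]
    exact Nat.totient_pos.mpr (pow_pos hp.pos n)
  haveI : Nontrivial O' := nontrivial_of_ne (bO ⟨0, hdim⟩) 0 (bO.ne_zero _)
  have hps : ∀ (k : ℕ) (x : O'), ((p : O) ^ k) • x = (p : O') ^ k * x := by
    intro k x
    rw [show ((p : O) ^ k) = (((p ^ k : ℕ) : O)) by push_cast; ring,
      Nat.cast_smul_eq_nsmul, nsmul_eq_mul]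
    push_cast; ring
  have hrzero : ∀ x : O', (∀ j, bO.repr x j = 0) → x = 0 := by
    intro x hx
    have h1 : bO.repr x = 0 := by
      ext j; exact hx j
    exact (LinearEquiv.map_eq_zero_iff bO.repr).mp h1
  have hnz : ∀ x : O', (p : O') * x = 0 → x = 0 := by
    intro x hx
    apply hrzero
    intro j
    have h1 : ((p : O) ^ 1) • x = 0 := by rw [hps]; simpa using hx
    have h2 : (p : O) * bO.repr x j = 0 := by
      have h3 := congrArg (fun z => bO.repr z j) h1
      simpa using h3
    rcases mul_eq_zero.mp h2 with h | h
    · exact absurd h hpO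
    · exact h
  have hOhaus : ∀ y : O, (∀ k : ℕ, (p : O) ^ k ∣ y) → y = 0 := by
    intro y hy
    refine IsHausdorff.haus (hadic.toIsHausdorff) y fun k => ?_
    rw [SModEq.zero, Ideal.span_singleton_pow, Submodule.ideal_span_singleton_smul]
    obtain ⟨c, hc⟩ := hy k
    rw [hc, ← smul_eq_mul]
    exact Submodule.smul_mem_pointwise_smul c _ ⊤ Submodule.mem_top
  have hhaus : ∀ x : O', (∀ k : ℕ, (p : O') ^ k ∣ x) → x = 0 := by
    intro x hx
    apply hrzero
    intro j
    apply hOhaus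
    intro k
    obtain ⟨y, hy⟩ := hx k
    have h1 : x = ((p : O) ^ k) • y := by rw [hps]; exact hy
    refine ⟨bO.repr y j, ?_⟩
    rw [h1, map_smul, Finsupp.smul_apply, smul_eq_mul]
  have hOcomp : ∀ α : ℕ → O, ∃ Lo : O, ∀ K : ℕ,
      (p : O) ^ K ∣ (Lo - ∑ k ∈ Finset.range K, (p : O) ^ k * α k) := by
    intro α
    have hcauchy : ∀ {m n' : ℕ}, m ≤ n' →
        (∑ k ∈ Finset.range m, (p : O) ^ k * α k)
          ≡ (∑ k ∈ Finset.range n', (p : O) ^ k * α k)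
          [SMOD ((Ideal.span {(p : O)}) ^ m • ⊤ : Submodule O O)] := by
      intro m n' hmn
      rw [SModEq.sub_mem, Ideal.span_singleton_pow, Submodule.ideal_span_singleton_smul]
      have h1 : (∑ k ∈ Finset.range m, (p : O) ^ k * α k)
          - (∑ k ∈ Finset.range n', (p : O) ^ k * α k)
          = -∑ k ∈ Finset.Ico m n', (p : O) ^ k * α k := by
        rw [Finset.sum_Ico_eq_sub _ hmn]; ring
      rw [h1]
      refine Submodule.neg_mem _ (Submodule.sum_mem _ fun k hk => ?_)
      have hk' : m ≤ k := (Finset.mem_Ico.mp hk).1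
      have h2 : (p : O) ^ k * α k = (p : O) ^ m • ((p : O) ^ (k - m) * α k) := by
        rw [smul_eq_mul, ← mul_assoc, ← pow_add, Nat.add_sub_cancel' hk']
      rw [h2]
      exact Submodule.smul_mem_pointwise_smul _ _ ⊤ Submodule.mem_top
    obtain ⟨Lo, hLo⟩ := IsPrecomplete.prec hadic.toIsPrecomplete @hcauchy
    refine ⟨Lo, fun K => ?_⟩
    have h1 := hLo K
    rw [SModEq.sub_mem, Ideal.span_singleton_pow, Submodule.ideal_span_singleton_smul,
      ← SetLike.mem_coe, Submodule.coe_pointwise_smul, Set.mem_smul_set] at h1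
    obtain ⟨c, -, hc⟩ := h1
    refine ⟨-c, ?_⟩
    rw [show Lo - ∑ k ∈ Finset.range K, (p : O) ^ k * α k
      = -((∑ k ∈ Finset.range K, (p : O) ^ k * α k) - Lo) from by ring, ← hc]
    rw [smul_eq_mul]
    ring
  have hcomp : ∀ a : ℕ → O', ∃ L : O', ∀ K : ℕ,
      (p : O') ^ K ∣ (L - ∑ k ∈ Finset.range K, (p : O') ^ k * a k) := by
    intro a
    choose Lo hLo using hOcomp
    set Lfin : O' := ∑ j : Fin pb.dim, (Lo (fun k => bO.repr (a k) j)) • bO j with hLfin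
    have hreprL : ∀ j, bO.repr Lfin j = Lo (fun k => bO.repr (a k) j) := by
      intro j
      rw [hLfin]
      exact congrFun (bO.repr_sum_self (fun j => Lo (fun k => bO.repr (a k) j))) j
    have hreprP : ∀ (K : ℕ) (j : Fin pb.dim),
        bO.repr (∑ k ∈ Finset.range K, (p : O') ^ k * a k) j
          = ∑ k ∈ Finset.range K, (p : O) ^ k * bO.repr (a k) j := by
      intro K j
      rw [map_sum, Finsupp.finset_sum_apply]
      refine Finset.sum_congr rfl fun k _ => ?_
      rw [← hps k (a k), map_smul, Finsupp.smul_apply, smul_eq_mul]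
    refine ⟨Lfin, fun K => ?_⟩
    have hDj : ∀ j, ∃ y, bO.repr (Lfin - ∑ k ∈ Finset.range K, (p : O') ^ k * a k) j
        = (p : O) ^ K * y := by
      intro j
      obtain ⟨y, hy⟩ := hLo (fun k => bO.repr (a k) j) K
      refine ⟨y, ?_⟩
      rw [map_sub, Finsupp.sub_apply, hreprL j, hreprP K j, hy]
    choose y hy using hDj
    refine ⟨∑ j : Fin pb.dim, (y j) • bO j, ?_⟩
    refine (Module.Basis.ext_elem_iff bO).mpr fun j => ?_
    rw [hy j, ← hps K, map_smul, Finsupp.smul_apply, smul_eq_mul]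
    congr 1
    exact (congrFun (bO.repr_sum_self y) j).symm
  exact InvDiffAux.main p hp hnz hhaus hcomp ι hι1 hι2 hι3
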